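/- Let ε > 0, μ ∈ ℤ, k ≥ 1, and let Y = μ + X where X follows the k-TSGD with P[X = x] = c·e^{−|x|ε} for |x| ≤ k, c = (1−e^{−ε})/(1+e^{−ε}−2e^{−(k+1)ε}). Then for y ∈ ℤ with μ ≤ y ≤ μ + k, P[Y ≥ y] = ((e^{(μ+k+1−y)ε} − 1)/(e^ε − 1))·c·e^{−kε}, and for μ − k ≤ y ≤ μ − 1, P[Y ≥ y] = 1 − ((e^{(k+y−μ)ε} − 1)/(e^ε − 1))·c·e^{−kε}; furthermore P[Y ≥ y] = 1 for y ≤ μ − k and P[Y ≥ y] = 0 for y > μ + k. -/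

import Mathlib

open Real

private lemma sum_exp_Icc (t : ℝ) (ht : t ≠ 0) (a : ℤ) :
    ∀ b : ℤ, a - 1 ≤ b →
      ∑ z ∈ Finset.Icc a b, Real.exp ((z : ℝ) * t) =
        (Real.exp (((b : ℝ) + 1) * t) - Real.exp ((a : ℝ) * t)) / (Real.exp t - 1) := by
  have hE : Real.exp t - 1 ≠ 0 := by
    have := Real.exp_eq_one_iff t
    intro h; apply ht; rw [← this]; linarith
  refine Int.le_induction ?_ ?_
  · rw [Finset.Icc_eq_empty (by omega)]
    push_cast
    simp [show ((a:ℝ) - 1 + 1) = (a:ℝ) by ring]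
  · intro b hb ih
    have hins : Finset.Icc a (b + 1) = insert (b + 1) (Finset.Icc a b) := by
      ext z; simp only [Finset.mem_Icc, Finset.mem_insert]; omega
    rw [hins, Finset.sum_insert (by simp [Finset.mem_Icc]), ih]
    have h2 : (((b + 1 : ℤ) : ℝ) + 1) * t = ((b : ℝ) + 1) * t + t := by push_cast; ring
    rw [h2, Real.exp_add]
    push_cast
    field_simp
    ring

/-- Mass function of the `k`-truncated symmetric geometric distribution. -/
noncomputable def tsgdMass (ε : ℝ) (k : ℤ) (x : ℤ) : ℝ :=
  if |x| ≤ k then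
    ((1 - exp (-ε)) / (1 + exp (-ε) - 2 * exp (-((k : ℝ) + 1) * ε))) *
      exp (-(|x| : ℝ) * ε)
  else 0

private lemma tsum_red (ε : ℝ) (k μ y : ℤ) :
    (∑' x : {z : ℤ // y ≤ μ + z}, tsgdMass ε k (x : ℤ)) =
      ∑ z ∈ Finset.Icc (max (y - μ) (-k)) k, tsgdMass ε k z := by
  rw [show (∑' x : {z : ℤ // y ≤ μ + z}, tsgdMass ε k (x : ℤ)) =
      ∑' x : {z : ℤ | y ≤ μ + z}, tsgdMass ε k (x : ℤ) from rfl, tsum_subtype]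
  rw [tsum_eq_sum (s := Finset.Icc (max (y - μ) (-k)) k) ?_]
  · refine Finset.sum_congr rfl fun z hz => ?_
    simp only [Finset.mem_Icc, max_le_iff] at hz
    exact Set.indicator_of_mem (by simp only [Set.mem_setOf_eq]; omega) _
  · intro z hz
    simp only [Finset.mem_Icc, max_le_iff, not_and, not_le] at hz
    by_cases hm : z ∈ {z : ℤ | y ≤ μ + z}
    · rw [Set.indicator_of_mem hm]
      simp only [Set.mem_setOf_eq] at hm
      rw [tsgdMass, if_neg (by rw [abs_le]; omega)]
    · exact Set.indicator_of_notMem hm _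

private lemma mass_of_nonneg (ε : ℝ) (k z : ℤ) (h0 : 0 ≤ z) (hzk : z ≤ k) :
    tsgdMass ε k z =
      ((1 - exp (-ε)) / (1 + exp (-ε) - 2 * exp (-((k : ℝ) + 1) * ε))) *
        exp ((z : ℝ) * (-ε)) := by
  rw [tsgdMass, if_pos (abs_le.mpr ⟨by omega, hzk⟩)]
  congr 1
  rw [abs_of_nonneg (show (0:ℝ) ≤ (z:ℝ) by exact_mod_cast h0)]
  ring

private lemma mass_of_nonpos (ε : ℝ) (k z : ℤ) (h0 : z ≤ 0) (hzk : -k ≤ z) :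
    tsgdMass ε k z =
      ((1 - exp (-ε)) / (1 + exp (-ε) - 2 * exp (-((k : ℝ) + 1) * ε))) *
        exp ((z : ℝ) * ε) := by
  rw [tsgdMass, if_pos (abs_le.mpr ⟨hzk, by omega⟩)]
  congr 1
  rw [abs_of_nonpos (show (z:ℝ) ≤ 0 by exact_mod_cast h0)]
  ring

private lemma alg1 (A B E : ℝ) (hA : 0 < A) (hB : 0 < B) (hE : 1 < E) :
    ((A*E)⁻¹ - B⁻¹)/(E⁻¹-1) = (A*E*B⁻¹-1)/(E-1) * A⁻¹ := by
  have h1 : E - 1 ≠ 0 := by linarith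
  have hE0 : E ≠ 0 := by linarith
  have h3 : E⁻¹ - 1 = (1 - E)/E := by field_simp
  have h4 : (1:ℝ) - E ≠ 0 := by linarith
  rw [h3, div_div_eq_mul_div, div_mul_eq_mul_div, div_eq_div_iff h4 h1]
  field_simp
  ring

private lemma alg2 (A B E : ℝ) (hA : 1 ≤ A) (hB : 0 < B) (hE : 1 < E) :
    (1-E⁻¹)/(1+E⁻¹-2*(A*E)⁻¹) * ((1-B)/(E-1)) +
      (1-E⁻¹)/(1+E⁻¹-2*(A*E)⁻¹) * (((A*E)⁻¹-1)/(E⁻¹-1)) =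
    1 - (A*B-1)/(E-1) * ((1-E⁻¹)/(1+E⁻¹-2*(A*E)⁻¹)) * A⁻¹ := by
  have h1 : E - 1 ≠ 0 := by linarith
  have hE0 : E ≠ 0 := by linarith
  have hA0 : A ≠ 0 := by linarith
  have h4 : (1:ℝ) - E ≠ 0 := by linarith
  have h3 : E⁻¹ - 1 = (1 - E)/E := by field_simp
  have hDpos : (0:ℝ) < A*E + A - 2 := by nlinarith
  have hD' : 1+E⁻¹-2*(A*E)⁻¹ = (A*E + A - 2)/(A*E) := by field_simp
  rw [h3, hD']
  have hDne : A*E + A - 2 ≠ 0 := ne_of_gt hDpos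
  have hDne' : -2 + A + A*E ≠ 0 := by linarith
  field_simp
  ring_nf
  field_simp
  ring

private lemma alg3 (A E : ℝ) (hA : 1 ≤ A) (hE : 1 < E) :
    (1-E⁻¹)/(1+E⁻¹-2*(A*E)⁻¹) * ((1-A⁻¹)/(E-1)) +
      (1-E⁻¹)/(1+E⁻¹-2*(A*E)⁻¹) * (((A*E)⁻¹-1)/(E⁻¹-1)) = 1 := by
  have h1 : E - 1 ≠ 0 := by linarith
  have hE0 : E ≠ 0 := by linarith
  have hA0 : A ≠ 0 := by linarith
  have h4 : (1:ℝ) - E ≠ 0 := by linarith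
  have h3 : E⁻¹ - 1 = (1 - E)/E := by field_simp
  have hDpos : (0:ℝ) < A*E + A - 2 := by nlinarith
  have hD' : 1+E⁻¹-2*(A*E)⁻¹ = (A*E + A - 2)/(A*E) := by field_simp
  rw [h3, hD']
  have hDne : A*E + A - 2 ≠ 0 := ne_of_gt hDpos
  have hDne' : -2 + A + A*E ≠ 0 := by linarith
  field_simp
  ring_nf
  field_simp
  ring

theorem tsgd_tail_cdf
    (ε : ℝ) (hε : 0 < ε) (μ : ℤ) (k : ℤ) (hk : 1 ≤ k) :
    ∀ y : ℤ,
      (μ ≤ y → y ≤ μ + k →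
        (∑' x : {z : ℤ // y ≤ μ + z}, tsgdMass ε k (x : ℤ)) =
          ((exp (((μ : ℝ) + k + 1 - y) * ε) - 1) / (exp ε - 1)) *
            ((1 - exp (-ε)) / (1 + exp (-ε) - 2 * exp (-((k : ℝ) + 1) * ε))) *
            exp (-(k : ℝ) * ε)) ∧
      (μ - k ≤ y → y ≤ μ - 1 →
        (∑' x : {z : ℤ // y ≤ μ + z}, tsgdMass ε k (x : ℤ)) =
          1 - ((exp (((k : ℝ) + y - μ) * ε) - 1) / (exp ε - 1)) *
            ((1 - exp (-ε)) / (1 + exp (-ε) - 2 * exp (-((k : ℝ) + 1) * ε))) *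
            exp (-(k : ℝ) * ε)) ∧
      (y ≤ μ - k → (∑' x : {z : ℤ // y ≤ μ + z}, tsgdMass ε k (x : ℤ)) = 1) ∧
      (μ + k < y → (∑' x : {z : ℤ // y ≤ μ + z}, tsgdMass ε k (x : ℤ)) = 0) := by
  intro y
  have hE1 : 1 < Real.exp ε := by
    have := Real.exp_lt_exp.mpr hε
    simpa using this
  have hEpos : (0:ℝ) < Real.exp ε := Real.exp_pos ε
  have hεne : -ε ≠ 0 := by linarith
  have hεne' : ε ≠ 0 := by linarith
  have hApos : (0:ℝ) < Real.exp ((k:ℝ) * ε) := Real.exp_pos _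
  have hk1 : (1:ℝ) ≤ (k:ℝ) := by exact_mod_cast hk
  have hA1 : (1:ℝ) ≤ Real.exp ((k:ℝ) * ε) := Real.one_le_exp (by nlinarith)
  -- rewrites for exponentials
  have ekk : Real.exp (-((k:ℝ) + 1) * ε) =
      (Real.exp ((k:ℝ) * ε) * Real.exp ε)⁻¹ := by
    rw [← Real.exp_add, ← Real.exp_neg]; congr 1; ring
  have ekk2 : Real.exp (((k:ℝ) + 1) * (-ε)) =
      (Real.exp ((k:ℝ) * ε) * Real.exp ε)⁻¹ := by
    rw [← Real.exp_add, ← Real.exp_neg]; congr 1; ring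
  have ekm : Real.exp (-(k:ℝ) * ε) = (Real.exp ((k:ℝ) * ε))⁻¹ := by
    rw [← Real.exp_neg]; congr 1; ring
  have eq1 : Real.exp (-ε) = (Real.exp ε)⁻¹ := Real.exp_neg ε
  refine ⟨?_, ?_, ?_, ?_⟩
  · -- case μ ≤ y ≤ μ + k
    intro h1 h2
    rw [tsum_red, max_eq_left (by omega)]
    rw [Finset.sum_congr rfl
      (fun z hz => mass_of_nonneg ε k z (by simp only [Finset.mem_Icc] at hz; omega)
        (by simp only [Finset.mem_Icc] at hz; omega)),
      ← Finset.mul_sum, sum_exp_Icc (-ε) hεne (y - μ) k (by omega)]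
    push_cast
    have eB : Real.exp (((y:ℝ) - μ) * (-ε)) =
        (Real.exp (((y:ℝ) - μ) * ε))⁻¹ := by
      rw [← Real.exp_neg]; congr 1; ring
    have eC : Real.exp (((μ:ℝ) + k + 1 - y) * ε) =
        Real.exp ((k:ℝ) * ε) * Real.exp ε * (Real.exp (((y:ℝ) - μ) * ε))⁻¹ := by
      rw [← Real.exp_neg, ← Real.exp_add, ← Real.exp_add]; congr 1; ring
    rw [ekk2, ekk, eB, eC, eq1, ekm]
    have hBpos : (0:ℝ) < Real.exp (((y:ℝ) - μ) * ε) := Real.exp_pos _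
    linear_combination
      ((1 - (Real.exp ε)⁻¹) /
          (1 + (Real.exp ε)⁻¹ - 2 * (Real.exp ((k:ℝ) * ε) * Real.exp ε)⁻¹)) *
        alg1 (Real.exp ((k:ℝ) * ε)) (Real.exp (((y:ℝ) - μ) * ε)) (Real.exp ε)
          hApos hBpos hE1
  · -- case μ - k ≤ y ≤ μ - 1
    intro h1 h2
    rw [tsum_red, max_eq_left (by omega)]
    have hsplit : Finset.Icc (y - μ) k = Finset.Icc (y - μ) (-1) ∪ Finset.Icc 0 k := by
      ext z; simp only [Finset.mem_Icc, Finset.mem_union]; omega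
    rw [hsplit, Finset.sum_union (by
      rw [Finset.disjoint_left]
      intro z hz1 hz2
      simp only [Finset.mem_Icc] at hz1 hz2
      omega)]
    rw [Finset.sum_congr rfl
      (fun z hz => mass_of_nonpos ε k z (by simp only [Finset.mem_Icc] at hz; omega)
        (by simp only [Finset.mem_Icc] at hz; omega)),
      ← Finset.mul_sum, sum_exp_Icc ε hεne' (y - μ) (-1) (by omega)]
    rw [Finset.sum_congr rfl
      (fun z hz => mass_of_nonneg ε k z (by simp only [Finset.mem_Icc] at hz; omega)
        (by simp only [Finset.mem_Icc] at hz; omega)),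
      ← Finset.mul_sum, sum_exp_Icc (-ε) hεne 0 k (by omega)]
    push_cast
    rw [show ((-1:ℝ) + 1) * ε = 0 by ring, show ((0:ℝ)) * (-ε) = 0 by ring,
      Real.exp_zero]
    have eB : Real.exp (((k:ℝ) + y - μ) * ε) =
        Real.exp ((k:ℝ) * ε) * Real.exp (((y:ℝ) - μ) * ε) := by
      rw [← Real.exp_add]; congr 1; ring
    rw [ekk2, ekk, eB, eq1, ekm]
    have hBpos : (0:ℝ) < Real.exp (((y:ℝ) - μ) * ε) := Real.exp_pos _
    linear_combination
      alg2 (Real.exp ((k:ℝ) * ε)) (Real.exp (((y:ℝ) - μ) * ε)) (Real.exp ε)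
        hA1 hBpos hE1
  · -- case y ≤ μ - k
    intro h1
    rw [tsum_red, max_eq_right (by omega)]
    have hsplit : Finset.Icc (-k) k = Finset.Icc (-k) (-1) ∪ Finset.Icc 0 k := by
      ext z; simp only [Finset.mem_Icc, Finset.mem_union]; omega
    rw [hsplit, Finset.sum_union (by
      rw [Finset.disjoint_left]
      intro z hz1 hz2
      simp only [Finset.mem_Icc] at hz1 hz2
      omega)]
    rw [Finset.sum_congr rfl
      (fun z hz => mass_of_nonpos ε k z (by simp only [Finset.mem_Icc] at hz; omega)
        (by simp only [Finset.mem_Icc] at hz; omega)),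
      ← Finset.mul_sum, sum_exp_Icc ε hεne' (-k) (-1) (by omega)]
    rw [Finset.sum_congr rfl
      (fun z hz => mass_of_nonneg ε k z (by simp only [Finset.mem_Icc] at hz; omega)
        (by simp only [Finset.mem_Icc] at hz; omega)),
      ← Finset.mul_sum, sum_exp_Icc (-ε) hεne 0 k (by omega)]
    push_cast
    rw [show ((-1:ℝ) + 1) * ε = 0 by ring, show ((0:ℝ)) * (-ε) = 0 by ring,
      Real.exp_zero, show (-(k:ℝ)) * ε = -((k:ℝ) * ε) by ring,
      Real.exp_neg ((k:ℝ) * ε)]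
    rw [ekk2, ekk, eq1]
    linear_combination alg3 (Real.exp ((k:ℝ) * ε)) (Real.exp ε) hA1 hE1
  · -- case μ + k < y
    intro h1
    rw [tsum_red, max_eq_left (by omega), Finset.Icc_eq_empty (by omega),
      Finset.sum_empty]
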